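/- For every real c ≥ 0 and every integer N ≥ 1, one has | ∑_{k=N+1}^∞ 1/(c + 4π²k²) − (1/(4π²N)) · a_N | ≤ c / (48 π⁴ N³), where a_N = N ∑_{k=N+1}^∞ 1/k². (Lemma 3, eq. (bound_uN), with c playing the role of k_R².) -/

import Mathlib

open Real

/-- For every `c ≥ 0` and every integer `N ≥ 1`,
`|∑_{k=N+1}^∞ 1/(c + 4π²k²) − a_N/(4π²N)| ≤ c/(48π⁴N³)`,
where `a_N = N ∑_{k=N+1}^∞ 1/k²`. (Lemma 3, eq. (bound_uN).) -/
theorem tail_sum_inv_shifted_quadratic (c : ℝ) (hc : 0 ≤ c) (N : ℕ) (hN : 1 ≤ N) :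
    |(∑' k : ℕ, 1 / (c + 4 * π ^ 2 * ((N : ℝ) + 1 + (k : ℝ)) ^ 2)) -
        (1 / (4 * π ^ 2 * (N : ℝ))) *
          ((N : ℝ) * ∑' k : ℕ, 1 / ((N : ℝ) + 1 + (k : ℝ)) ^ 2)| ≤
      c / (48 * π ^ 4 * (N : ℝ) ^ 3) := by
  have hπ : 0 < π := Real.pi_pos
  have hπ2 : (0:ℝ) < 4 * π ^ 2 := by positivity
  have hNR : (1:ℝ) ≤ (N : ℝ) := by exact_mod_cast hN
  have hNpos : (0:ℝ) < (N : ℝ) := by linarith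
  set m : ℕ → ℝ := fun k => (N : ℝ) + 1 + (k : ℝ) with hm
  have hmpos : ∀ k, 0 < m k := fun k => by
    have : (0:ℝ) ≤ (k : ℝ) := Nat.cast_nonneg k
    simp only [hm]; linarith
  -- summability of 1/m^2
  have hsum2 : Summable (fun k : ℕ => 1 / (m k) ^ 2) := by
    have : Summable (fun k : ℕ => 1 / ((k : ℝ) + (N + 1)) ^ 2) := by
      have := (summable_nat_add_iff (N + 1)).mpr
        (Real.summable_one_div_nat_pow.mpr (by norm_num : 1 < 2))
      simpa using this
    refine this.congr fun k => ?_
    push_cast [hm]; ring_nf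
  -- summability of 1/m^4
  have hsum4 : Summable (fun k : ℕ => 1 / (m k) ^ 4) := by
    have : Summable (fun k : ℕ => 1 / ((k : ℝ) + (N + 1)) ^ 4) := by
      have := (summable_nat_add_iff (N + 1)).mpr
        (Real.summable_one_div_nat_pow.mpr (by norm_num : 1 < 4))
      simpa using this
    refine this.congr fun k => ?_
    push_cast [hm]; ring_nf
  -- summability of b
  have hb : Summable (fun k : ℕ => 1 / (c + 4 * π ^ 2 * (m k) ^ 2)) := by
    refine Summable.of_nonneg_of_le (fun k => by positivity) (fun k => ?_)
      (hsum2.mul_left (1 / (4 * π ^ 2)))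
    have h1 : 0 < 4 * π ^ 2 * (m k) ^ 2 := by positivity
    rw [div_mul_div_comm, one_mul]
    exact one_div_le_one_div_of_le h1 (by linarith)
  -- the difference d k ≥ 0 and ≤ c/(16π⁴ m⁴)
  set d : ℕ → ℝ := fun k =>
    1 / (4 * π ^ 2 * (m k) ^ 2) - 1 / (c + 4 * π ^ 2 * (m k) ^ 2) with hd
  have hsum2' : Summable (fun k : ℕ => 1 / (4 * π ^ 2 * (m k) ^ 2)) := by
    have := hsum2.mul_left (1 / (4 * π ^ 2))
    refine this.congr fun k => ?_
    rw [div_mul_div_comm, one_mul]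
  have hdsum : Summable d := hsum2'.sub hb
  have hd_nonneg : ∀ k, 0 ≤ d k := by
    intro k
    have h1 : 0 < 4 * π ^ 2 * (m k) ^ 2 := by positivity
    have := one_div_le_one_div_of_le h1 (by linarith : 4 * π ^ 2 * (m k) ^ 2 ≤ c + 4 * π ^ 2 * (m k) ^ 2)
    simp only [hd]; linarith
  have hd_le : ∀ k, d k ≤ c / (16 * π ^ 4) * (1 / (m k) ^ 4) := by
    intro k
    have hmk := hmpos k
    have h1 : 0 < 4 * π ^ 2 * (m k) ^ 2 := by positivity
    have h2 : 0 < c + 4 * π ^ 2 * (m k) ^ 2 := by linarith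
    have key : d k = c / (4 * π ^ 2 * (m k) ^ 2 * (c + 4 * π ^ 2 * (m k) ^ 2)) := by
      simp only [hd]
      field_simp
      ring
    rw [key]
    rw [div_mul_div_comm, mul_one]
    apply div_le_div_of_nonneg_left hc (by positivity)
    nlinarith [sq_nonneg (m k), sq_nonneg π, mul_pos h1 hmk, sq_nonneg (π * m k)]
  -- rewrite goal
  have hrw : (1 / (4 * π ^ 2 * (N : ℝ))) * ((N : ℝ) * ∑' k : ℕ, 1 / (m k) ^ 2)
      = ∑' k : ℕ, 1 / (4 * π ^ 2 * (m k) ^ 2) := by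
    have h1 : (1 / (4 * π ^ 2 * (N : ℝ))) * ((N : ℝ) * ∑' k : ℕ, 1 / (m k) ^ 2)
        = (1 / (4 * π ^ 2)) * ∑' k : ℕ, 1 / (m k) ^ 2 := by
      field_simp
    rw [h1, ← tsum_mul_left]
    refine tsum_congr fun k => ?_
    rw [div_mul_div_comm, one_mul]
  have hsplit : (∑' k : ℕ, 1 / (c + 4 * π ^ 2 * (m k) ^ 2)) -
      (1 / (4 * π ^ 2 * (N : ℝ))) * ((N : ℝ) * ∑' k : ℕ, 1 / (m k) ^ 2) = -(∑' k, d k) := by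
    rw [hrw, ← Summable.tsum_sub hb hsum2']
    rw [← tsum_neg]
    congr 1; funext k; simp only [hd]; ring
  rw [hsplit, abs_neg, abs_of_nonneg (tsum_nonneg hd_nonneg)]
  -- bound ∑ d ≤ c/(16π⁴) * ∑ 1/m^4
  have step1 : (∑' k, d k) ≤ c / (16 * π ^ 4) * ∑' k, 1 / (m k) ^ 4 := by
    rw [← tsum_mul_left]
    exact Summable.tsum_le_tsum hd_le hdsum (hsum4.mul_left _)
  -- tail bound: ∑ 1/m^4 ≤ 1/(3N³)
  have tail : (∑' k : ℕ, 1 / (m k) ^ 4) ≤ 1 / (3 * (N : ℝ) ^ 3) := by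
    apply Real.tsum_le_of_sum_range_le (fun k => by positivity)
    intro n
    set g : ℕ → ℝ := fun k => 1 / (3 * ((N : ℝ) + k) ^ 3) with hg
    have key : ∀ k : ℕ, 1 / (m k) ^ 4 ≤ g k - g (k + 1) := by
      intro k
      simp only [hg]
      push_cast
      have hk : (0:ℝ) ≤ (k : ℝ) := Nat.cast_nonneg k
      have ha : (1:ℝ) ≤ (N : ℝ) + k := by linarith
      have hmk : m k = (N : ℝ) + (k + 1) := by simp only [hm]; push_cast; ring
      rw [hmk]
      have h1 : (0:ℝ) < (N : ℝ) + k := by linarith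
      have h2 : (0:ℝ) < (N : ℝ) + (k + 1) := by linarith
      rw [div_sub_div _ _ (by positivity) (by positivity), div_le_div_iff₀ (by positivity) (by positivity)]
      nlinarith [pow_pos h1 3, pow_pos h2 3, sq_nonneg ((N:ℝ)+k), mul_pos h1 h2,
        mul_pos (mul_pos h1 h1) h2, mul_pos (mul_pos h2 h2) h1]
    calc ∑ k ∈ Finset.range n, 1 / (m k) ^ 4
        ≤ ∑ k ∈ Finset.range n, (g k - g (k + 1)) :=
          Finset.sum_le_sum fun k _ => key k
      _ = g 0 - g n := Finset.sum_range_sub' g n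
      _ ≤ 1 / (3 * (N : ℝ) ^ 3) := by
          have hn : (0:ℝ) ≤ (n : ℝ) := Nat.cast_nonneg n
          have h0 : 0 ≤ g n := by simp only [hg]; positivity
          have : g 0 = 1 / (3 * (N : ℝ) ^ 3) := by simp [hg]
          linarith
  calc (∑' k, d k) ≤ c / (16 * π ^ 4) * (1 / (3 * (N : ℝ) ^ 3)) := by
        refine step1.trans ?_
        exact mul_le_mul_of_nonneg_left tail (by positivity)
    _ = c / (48 * π ^ 4 * (N : ℝ) ^ 3) := by
        rw [div_mul_div_comm, mul_one]
        congr 1; ring
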